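/- Fix a constant L > 0, a finite index set V, a nonempty subset N ⊆ V with |N| = m, and admissible functions h_i : ℝ → ℝ for i ∈ V. Let β be a real number with β ≤ 1/m and let γ be a natural number with γ ≤ m. Then the set X̃(β,γ) is convex and closed. -/

import Mathlib

/-- A function `h : ℝ → ℝ` is admissible with constant `L > 0` if it is convex,
continuously differentiable, its derivative is bounded by `L` and `L`-Lipschitz,
and its set of unconstrained global minimizers is nonempty and compact. -/
def Admissible (L : ℝ) (h : ℝ → ℝ) : Prop :=
  ConvexOn ℝ Set.univ h ∧ ContDiff ℝ 1 h ∧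
    (∀ x : ℝ, |deriv h x| ≤ L) ∧ LipschitzWith L.toNNReal (deriv h) ∧
    {x : ℝ | ∀ y : ℝ, h x ≤ h y}.Nonempty ∧ IsCompact {x : ℝ | ∀ y : ℝ, h x ≤ h y}

/-- A weight vector `α` over the index set `V` is `(β,γ)`-valid over `(V,N)` if
all weights are nonnegative, they sum (over `V`) to `1`, and at least `γ`
indices in `N` have weight at least `β`. -/
def ValidWeightVN {ι : Type*} (V N : Finset ι) (β : ℝ) (γ : ℕ) (α : ι → ℝ) : Prop :=
  (∀ i ∈ V, 0 ≤ α i) ∧ (∑ i ∈ V, α i = 1) ∧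
    ∃ S ⊆ N, γ ≤ S.card ∧ ∀ i ∈ S, β ≤ α i

/-- `X̃(β,γ)`: the union over all weight vectors `α` that are `(β,γ)`-valid over
`(V,N)` of the set of unconstrained global minimizers of
`x ↦ ∑_{i∈V} α_i h_i(x)`. -/
def XTildeSet {ι : Type*} (V N : Finset ι) (h : ι → ℝ → ℝ) (β : ℝ) (γ : ℕ) : Set ℝ :=
  {x : ℝ | ∃ α : ι → ℝ, ValidWeightVN V N β γ α ∧
    ∀ y : ℝ, ∑ i ∈ V, α i * h i x ≤ ∑ i ∈ V, α i * h i y}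

/-- Lemma (convex C1): if `β ≤ 1/|N|` and `γ ≤ |N|`, the set `X̃(β,γ)` is
convex and closed. -/
lemma XT_min_of_deriv_zero {f g : ℝ → ℝ} (hd : ∀ x, HasDerivAt f (g x) x)
    (hg : Monotone g) {x : ℝ} (hx : g x = 0) : ∀ y, f x ≤ f y := by
  intro y
  rcases lt_trichotomy x y with hxy | rfl | hyx
  · obtain ⟨c, hc, hceq⟩ := exists_hasDerivAt_eq_slope f g hxy
      (fun z _ => (hd z).continuousAt.continuousWithinAt) (fun z hz => hd z)
    have h1 : 0 ≤ g c := hx ▸ hg hc.1.le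
    rw [eq_div_iff (by linarith : y - x ≠ 0)] at hceq
    nlinarith
  · exact le_refl _
  · obtain ⟨c, hc, hceq⟩ := exists_hasDerivAt_eq_slope f g hyx
      (fun z _ => (hd z).continuousAt.continuousWithinAt) (fun z hz => hd z)
    have h1 : g c ≤ 0 := hx ▸ hg hc.2.le
    rw [eq_div_iff (by linarith : x - y ≠ 0)] at hceq
    nlinarith

theorem XTildeSet_convex_isClosed {ι : Type*} (L : ℝ) (hL : 0 < L)
    (V N : Finset ι) (hNV : N ⊆ V) (hNne : N.Nonempty) (m : ℕ) (hm : N.card = m)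
    (h : ι → ℝ → ℝ) (hadm : ∀ i ∈ V, Admissible L (h i))
    (β : ℝ) (hβ : β ≤ 1 / (m : ℝ)) (γ : ℕ) (hγ : γ ≤ m) :
    Convex ℝ (XTildeSet V N h β γ) ∧ IsClosed (XTildeSet V N h β γ) := by
  classical
  -- basic facts
  have hm0 : 0 < m := hm ▸ Finset.card_pos.mpr hNne
  have hmR : (0:ℝ) < (m:ℝ) := by exact_mod_cast hm0
  set D : (ι → ℝ) → ℝ → ℝ := fun w x => ∑ i ∈ V, w i * deriv (h i) x with hD
  have hdiff : ∀ i ∈ V, Differentiable ℝ (h i) :=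
    fun i hi => (hadm i hi).2.1.differentiable one_ne_zero
  have hgm : ∀ i ∈ V, Monotone (deriv (h i)) := fun i hi =>
    monotoneOn_univ.mp ((hadm i hi).1.monotoneOn_deriv (fun x _ => (hdiff i hi x)))
  have hDderiv : ∀ (w : ι → ℝ) (x : ℝ),
      HasDerivAt (fun y => ∑ i ∈ V, w i * h i y) (D w x) x := fun w x =>
    HasDerivAt.fun_sum (fun i hi => ((hdiff i hi x).hasDerivAt.const_mul (w i)))
  have hDmono : ∀ w : ι → ℝ, (∀ i ∈ V, 0 ≤ w i) → Monotone (fun x => D w x) := by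
    intro w hw a b hab
    exact Finset.sum_le_sum fun i hi =>
      mul_le_mul_of_nonneg_left (hgm i hi hab) (hw i hi)
  have hmem_min : ∀ (w : ι → ℝ) (x : ℝ), (∀ i ∈ V, 0 ≤ w i) → D w x = 0 →
      ValidWeightVN V N β γ w → x ∈ XTildeSet V N h β γ := by
    intro w x hw hDx hv
    exact ⟨w, hv, XT_min_of_deriv_zero (hDderiv w) (hDmono w hw) hDx⟩
  -- the compact set of truncated valid weights
  set B : Set (ι → ℝ) := {w | (∀ i, w i ∈ Set.Icc (0:ℝ) 1) ∧ (∑ i ∈ V, w i = 1) ∧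
      ∃ S ⊆ N, γ ≤ S.card ∧ ∀ i ∈ S, β ≤ w i} with hBdef
  have hBclosed : IsClosed B := by
    have h1 : IsClosed {w : ι → ℝ | ∀ i, w i ∈ Set.Icc (0:ℝ) 1} := by
      have : {w : ι → ℝ | ∀ i, w i ∈ Set.Icc (0:ℝ) 1}
          = ⋂ i, (fun w : ι → ℝ => w i) ⁻¹' (Set.Icc (0:ℝ) 1) := by
        ext w; simp [Set.mem_iInter]
      rw [this]
      exact isClosed_iInter fun i => isClosed_Icc.preimage (continuous_apply i)
    have h2 : IsClosed {w : ι → ℝ | ∑ i ∈ V, w i = 1} :=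
      isClosed_eq (continuous_finset_sum V fun i _ => continuous_apply i)
        continuous_const
    have h3 : IsClosed {w : ι → ℝ | ∃ S ⊆ N, γ ≤ S.card ∧ ∀ i ∈ S, β ≤ w i} := by
      have e3 : {w : ι → ℝ | ∃ S ⊆ N, γ ≤ S.card ∧ ∀ i ∈ S, β ≤ w i}
          = ⋃ S ∈ N.powerset.filter (fun S => γ ≤ S.card),
              {w : ι → ℝ | ∀ i ∈ S, β ≤ w i} := by
        ext w
        simp only [Set.mem_setOf_eq, Set.mem_iUnion, Finset.mem_filter,
          Finset.mem_powerset, exists_prop]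
        tauto
      rw [e3]
      refine isClosed_biUnion_finset fun S _ => ?_
      have : {w : ι → ℝ | ∀ i ∈ S, β ≤ w i} = ⋂ i ∈ S, {w : ι → ℝ | β ≤ w i} := by
        ext w; simp
      rw [this]
      exact isClosed_biInter fun i _ =>
        isClosed_le continuous_const (continuous_apply i)
    have : B = {w : ι → ℝ | ∀ i, w i ∈ Set.Icc (0:ℝ) 1} ∩
        ({w : ι → ℝ | ∑ i ∈ V, w i = 1} ∩
         {w : ι → ℝ | ∃ S ⊆ N, γ ≤ S.card ∧ ∀ i ∈ S, β ≤ w i}) := by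
      ext w
      simp only [hBdef, Set.mem_setOf_eq, Set.mem_inter_iff]
    rw [this]
    exact h1.inter (h2.inter h3)
  have hBcompact : IsCompact B := by
    refine IsCompact.of_isClosed_subset
      (isCompact_univ_pi (fun _ : ι => isCompact_Icc (a := (0:ℝ)) (b := 1)))
      hBclosed ?_
    intro w hw
    rw [Set.mem_univ_pi]
    exact fun i => hw.1 i
  -- the star center
  set astar : ι → ℝ := fun i => if i ∈ N then (1/(m:ℝ)) else 0 with hastardef
  have hastarN : ∀ i ∈ N, β ≤ astar i := by
    intro i hi; simp only [hastardef, hi, if_pos]; exact hβ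
  have hastar_mem : astar ∈ B := by
    refine ⟨?_, ?_, ?_⟩
    · intro i
      by_cases hi : i ∈ N <;> simp only [hastardef, hi, if_pos, if_neg, if_true,
        if_false, Set.mem_Icc]
      · constructor
        · positivity
        · rw [div_le_one hmR]; exact_mod_cast hm0
      · exact ⟨le_refl _, zero_le_one⟩
    · rw [Finset.sum_ite_mem, Finset.inter_eq_right.mpr hNV, Finset.sum_const, hm,
        nsmul_eq_mul]
      field_simp
    · obtain ⟨S, hSN, hScard⟩ := Finset.exists_subset_card_eq
        (show γ ≤ N.card by rw [hm]; exact hγ)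
      exact ⟨S, hSN, hScard.ge, fun i hi => hastarN i (hSN hi)⟩
  have hBvalid : ∀ w ∈ B, ValidWeightVN V N β γ w :=
    fun w hw => ⟨fun i _ => (hw.1 i).1, hw.2.1, hw.2.2⟩
  have hBnonneg : ∀ w ∈ B, ∀ i, (0:ℝ) ≤ w i := fun w hw i => (hw.1 i).1
  -- truncation: every point of X̃ has a witness in B with D = 0
  have htrunc : ∀ x ∈ XTildeSet V N h β γ, ∃ w ∈ B, D w x = 0 := by
    rintro x ⟨α, ⟨hα0, hα1, S, hSN, hSc, hSβ⟩, hminx⟩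
    have hlocmin : IsLocalMin (fun y => ∑ i ∈ V, α i * h i y) x :=
      Filter.Eventually.of_forall hminx
    have hDα : D α x = 0 := by
      have h1 := hlocmin.deriv_eq_zero
      have h2 := (hDderiv α x).deriv
      rw [h1] at h2; exact h2.symm
    refine ⟨fun i => if i ∈ V then α i else 0, ⟨?_, ?_, ?_⟩, ?_⟩
    · intro i
      by_cases hi : i ∈ V <;> simp only [hi, if_pos, if_neg, if_true, if_false,
        Set.mem_Icc]
      · exact ⟨hα0 i hi, hα1 ▸ Finset.single_le_sum (fun j hj => hα0 j hj) hi⟩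
      · exact ⟨le_refl _, zero_le_one⟩
    · rw [← hα1]; exact Finset.sum_congr rfl fun i hi => by simp [hi]
    · exact ⟨S, hSN, hSc, fun i hi => by
        simp only [hNV (hSN hi), if_pos]; exact hSβ i hi⟩
    · rw [← hDα]
      exact Finset.sum_congr rfl fun i hi => by simp [hi]
  -- key combination lemma
  have hkey : ∀ (x : ℝ) (a : ι → ℝ), a ∈ B → ∀ b : ι → ℝ, b ∈ B →
      (∀ i ∈ N, β ≤ b i) → D a x * D b x ≤ 0 → x ∈ XTildeSet V N h β γ := by
    intro x a ha b hb hbN hprod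
    by_cases hDa : D a x = 0
    · exact hmem_min a x (fun i hi => hBnonneg a ha i) hDa (hBvalid a ha)
    · have hne : D b x - D a x ≠ 0 := by
        intro hc
        have heq : D a x = D b x := by linarith
        have hle : D a x * D a x ≤ 0 := by
          calc D a x * D a x = D a x * D b x := by rw [heq]
            _ ≤ 0 := hprod
        exact hDa (mul_self_eq_zero.mp (le_antisymm hle (mul_self_nonneg _)))
      set t : ℝ := D b x / (D b x - D a x) with htdef
      have ht : 0 ≤ t ∧ t ≤ 1 := by
        rcases lt_or_gt_of_ne hDa with hneg | hpos
        · have hb0 : 0 ≤ D b x := by nlinarith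
          have hden : 0 < D b x - D a x := by linarith
          exact ⟨div_nonneg hb0 hden.le, (div_le_one hden).mpr (by linarith)⟩
        · have hb0 : D b x ≤ 0 := by nlinarith
          have hden : D b x - D a x < 0 := by linarith
          constructor
          · exact div_nonneg_iff.mpr (Or.inr ⟨hb0, hden.le⟩)
          · rw [div_le_one_iff]
            right; right; exact ⟨hden, by linarith⟩
      set c : ι → ℝ := fun i => t * a i + (1 - t) * b i with hcdef
      have hc0 : ∀ i, 0 ≤ c i := by
        intro i
        have := hBnonneg a ha i; have := hBnonneg b hb i
        simp only [hcdef]; nlinarith [ht.1, ht.2]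
      have hcsum : ∑ i ∈ V, c i = 1 := by
        simp only [hcdef]
        rw [Finset.sum_add_distrib, ← Finset.mul_sum, ← Finset.mul_sum,
          ha.2.1, hb.2.1]
        ring
      have hcD : D c x = 0 := by
        have hexp : D c x = t * D a x + (1 - t) * D b x := by
          simp only [hD, hcdef]
          rw [Finset.mul_sum, Finset.mul_sum, ← Finset.sum_add_distrib]
          exact Finset.sum_congr rfl fun i hi => by ring
        rw [hexp, htdef]
        field_simp
        ring
      obtain ⟨S, hSN, hSc, hSa⟩ := ha.2.2
      refine hmem_min c x (fun i _ => hc0 i) hcD ⟨fun i _ => hc0 i, hcsum,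
        S, hSN, hSc, fun i hi => ?_⟩
      have h1 := hSa i hi
      have h2 := hbN i (hSN hi)
      simp only [hcdef]; nlinarith [ht.1, ht.2]
  have hsignkey : ∀ (x : ℝ) (a b : ι → ℝ), a ∈ B → b ∈ B → D a x ≤ 0 →
      0 ≤ D b x → x ∈ XTildeSet V N h β γ := by
    intro x a b ha hb hDa hDb
    rcases le_or_gt 0 (D astar x) with hs | hs
    · exact hkey x a ha astar hastar_mem hastarN
        (mul_nonpos_iff.mpr (Or.inr ⟨hDa, hs⟩))
    · exact hkey x b hb astar hastar_mem hastarN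
        (mul_nonpos_iff.mpr (Or.inl ⟨hDb, hs.le⟩))
  constructor
  · -- convexity
    intro p hp q hq tp tq htp htq hpq
    obtain ⟨wp, hwpB, hDp⟩ := htrunc p hp
    obtain ⟨wq, hwqB, hDq⟩ := htrunc q hq
    have hz : tp • p + tq • q = tp * p + tq * q := by simp [smul_eq_mul]
    rw [hz]
    set z : ℝ := tp * p + tq * q with hzdef
    have htp' : tp = 1 - tq := by linarith
    have htq' : tq = 1 - tp := by linarith
    rcases le_total p q with hpq' | hpq'
    · have hz1 : p ≤ z := by
        rw [hzdef, htp']; nlinarith [mul_nonneg htq (sub_nonneg.mpr hpq')]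
      have hz2 : z ≤ q := by
        rw [hzdef, htq']
        nlinarith [mul_nonneg htp (sub_nonneg.mpr hpq')]
      have h1 : D wq z ≤ 0 := hDq ▸ hDmono wq (fun i _ => hBnonneg wq hwqB i) hz2
      have h2 : 0 ≤ D wp z := hDp ▸ hDmono wp (fun i _ => hBnonneg wp hwpB i) hz1
      exact hsignkey z wq wp hwqB hwpB h1 h2
    · have hz1 : q ≤ z := by
        rw [hzdef, htq']; nlinarith [mul_nonneg htp (sub_nonneg.mpr hpq')]
      have hz2 : z ≤ p := by
        rw [hzdef, htp']
        nlinarith [mul_nonneg htq (sub_nonneg.mpr hpq')]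
      have h1 : D wp z ≤ 0 := hDp ▸ hDmono wp (fun i _ => hBnonneg wp hwpB i) hz2
      have h2 : 0 ≤ D wq z := hDq ▸ hDmono wq (fun i _ => hBnonneg wq hwqB i) hz1
      exact hsignkey z wp wq hwpB hwqB h1 h2
  · -- closedness
    refine isClosed_of_closure_subset ?_
    intro x hx
    have hcont : ∀ y : ℝ, Continuous (fun w : ι → ℝ => D w y) :=
      fun y => continuous_finset_sum V fun i _ => (continuous_apply i).mul
        continuous_const
    obtain ⟨amin, haminB, hamin⟩ := hBcompact.exists_isMinOn ⟨astar, hastar_mem⟩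
      (hcont x).continuousOn
    obtain ⟨amax, hamaxB, hamax⟩ := hBcompact.exists_isMaxOn ⟨astar, hastar_mem⟩
      (hcont x).continuousOn
    have hLip : ∀ w ∈ B, ∀ y y' : ℝ, |D w y - D w y'| ≤ L * |y - y'| := by
      intro w hw y y'
      have : D w y - D w y' = ∑ i ∈ V, w i * (deriv (h i) y - deriv (h i) y') := by
        rw [← Finset.sum_sub_distrib]
        exact Finset.sum_congr rfl fun i hi => by ring
      rw [this]
      calc |∑ i ∈ V, w i * (deriv (h i) y - deriv (h i) y')|
          ≤ ∑ i ∈ V, |w i * (deriv (h i) y - deriv (h i) y')| :=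
            Finset.abs_sum_le_sum_abs _ _
        _ ≤ ∑ i ∈ V, w i * (L * |y - y'|) := by
            refine Finset.sum_le_sum fun i hi => ?_
            rw [abs_mul, abs_of_nonneg (hBnonneg w hw i)]
            refine mul_le_mul_of_nonneg_left ?_ (hBnonneg w hw i)
            have hlip := (hadm i hi).2.2.2.1.dist_le_mul y y'
            rw [Real.dist_eq, Real.dist_eq, Real.coe_toNNReal L hL.le] at hlip
            exact hlip
        _ = L * |y - y'| := by rw [← Finset.sum_mul, hw.2.1, one_mul]
    have hbound : ∀ ε : ℝ, 0 < ε → D amin x ≤ ε ∧ -ε ≤ D amax x := by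
      intro ε hε
      obtain ⟨x', hx', hdist⟩ := Metric.mem_closure_iff.mp hx (ε / L)
        (div_pos hε hL)
      obtain ⟨w, hwB, hDw⟩ := htrunc x' hx'
      have hd : L * |x - x'| < ε := by
        rw [← Real.dist_eq]
        calc L * dist x x' < L * (ε / L) := by
              exact mul_lt_mul_of_pos_left hdist hL
          _ = ε := by field_simp
      have h1 : D amin x ≤ D w x := isMinOn_iff.mp hamin w hwB
      have h2 : D w x ≤ D amax x := isMaxOn_iff.mp hamax w hwB
      have h3 := abs_le.mp (hLip w hwB x x')
      constructor
      · calc D amin x ≤ D w x := h1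
          _ ≤ D w x' + L * |x - x'| := by linarith [h3.2]
          _ ≤ ε := by rw [hDw]; linarith
      · calc -ε ≤ D w x' - L * |x - x'| := by rw [hDw]; linarith
          _ ≤ D w x := by linarith [h3.1]
          _ ≤ D amax x := h2
    have hminle : D amin x ≤ 0 := by
      refine le_of_forall_pos_le_add fun ε hε => ?_
      linarith [(hbound ε hε).1]
    have hmaxge : 0 ≤ D amax x := by
      have : ∀ ε : ℝ, 0 < ε → (0:ℝ) ≤ D amax x + ε := by
        intro ε hε; linarith [(hbound ε hε).2]
      exact le_of_forall_pos_le_add fun ε hε => this ε hε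
    exact hsignkey x amin amax haminB hamaxB hminle hmaxge
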